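/- Let k ≥ 4 and suppose L_i < r for every i ∈ {2,…,k} (no condition is imposed on L_1). Then every nonempty path component of the restricted second configuration space (Star_k)^2_{r,L}, regarded as a subspace, is simply connected. -/

import Mathlib

/-- A point of the metric star graph before identification: a pair `(i, t)` with
`1 ≤ i ≤ k` and `0 ≤ t ≤ L i`, i.e. a point on the `i`-th edge at distance `t` from
the center. -/
def StarPt (k : ℕ) (L : ℕ → ℝ) : Type :=
  {p : ℕ × ℝ // 1 ≤ p.1 ∧ p.1 ≤ k ∧ 0 ≤ p.2 ∧ p.2 ≤ L p.1}

/-- The path pseudodistance on the points of the star graph: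
`δ((i,s),(j,t)) = |s − t|` if `i = j` and `s + t` otherwise. -/
noncomputable def starDist {k : ℕ} {L : ℕ → ℝ} (p q : StarPt k L) : ℝ :=
  if p.val.1 = q.val.1 then |p.val.2 - q.val.2| else p.val.2 + q.val.2

theorem starDist_self {k : ℕ} {L : ℕ → ℝ} (p : StarPt k L) : starDist p p = 0 := by
  simp [starDist]

theorem starDist_comm {k : ℕ} {L : ℕ → ℝ} (p q : StarPt k L) :
    starDist p q = starDist q p := by
  unfold starDist
  rcases eq_or_ne p.val.1 q.val.1 with h | h
  · rw [if_pos h, if_pos h.symm, abs_sub_comm]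
  · rw [if_neg h, if_neg h.symm, add_comm]

theorem starDist_triangle {k : ℕ} {L : ℕ → ℝ} (p q s : StarPt k L) :
    starDist p s ≤ starDist p q + starDist q s := by
  obtain ⟨hp1, hp2, hp3, hp4⟩ := p.prop
  obtain ⟨hq1, hq2, hq3, hq4⟩ := q.prop
  obtain ⟨hs1, hs2, hs3, hs4⟩ := s.prop
  unfold starDist
  by_cases h1 : p.val.1 = q.val.1 <;> by_cases h2 : q.val.1 = s.val.1
  · rw [if_pos (h1.trans h2), if_pos h1, if_pos h2]
    exact abs_sub_le _ _ _
  · rw [if_neg (fun h => h2 (h1.symm.trans h)), if_pos h1, if_neg h2]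
    have := le_abs_self (p.val.2 - q.val.2)
    linarith
  · rw [if_neg (fun h => h1 (h.trans h2.symm)), if_neg h1, if_pos h2]
    have := neg_le_abs (q.val.2 - s.val.2)
    linarith
  · by_cases h3 : p.val.1 = s.val.1
    · rw [if_pos h3, if_neg h1, if_neg h2]
      rw [abs_sub_le_iff]
      constructor <;> linarith
    · rw [if_neg h3, if_neg h1, if_neg h2]
      linarith

/-- The path pseudometric space structure on the points of the star graph. -/
noncomputable instance starPseudoMetricSpace (k : ℕ) (L : ℕ → ℝ) :
    PseudoMetricSpace (StarPt k L) where
  dist := starDist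
  dist_self := starDist_self
  dist_comm := starDist_comm
  dist_triangle := starDist_triangle

/-- The metric star graph `Star_k(L)`: the quotient of the pseudometric space of points
by the identification of points at pseudodistance zero (a metric space). -/
abbrev StarGraph (k : ℕ) (L : ℕ → ℝ) : Type := SeparationQuotient (StarPt k L)

/-- The restricted second configuration space `(Star_k)²_{r,L}`, as a topological subspace
of the product `Star_k(L) × Star_k(L)`. -/
abbrev ConfigSpace (k : ℕ) (L : ℕ → ℝ) (r : ℝ) : Type :=
  {pq : StarGraph k L × StarGraph k L // r ≤ dist pq.1 pq.2}

namespace StarProof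
open SeparationQuotient

variable {k : ℕ} {L : ℕ → ℝ}

/-- point constructor with the correct elaboration of `StarPt` -/
def pt (k : ℕ) (L : ℕ → ℝ) (i : ℕ) (s : ℝ) (h : 1 ≤ i ∧ i ≤ k ∧ 0 ≤ s ∧ s ≤ L i) :
    StarPt k L := ⟨(i, s), h⟩

@[simp] theorem pt_fst (i s h) : (pt k L i s h).val.1 = i := rfl
@[simp] theorem pt_snd (i s h) : (pt k L i s h).val.2 = s := rfl

theorem dist_mk_mk (a b : StarPt k L) :
    dist (mk a) (mk b) = if a.val.1 = b.val.1 then |a.val.2 - b.val.2| else a.val.2 + b.val.2 := by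
  rw [SeparationQuotient.dist_mk]; rfl

theorem mk_eq_iff (a b : StarPt k L) :
    mk a = mk b ↔ (if a.val.1 = b.val.1 then |a.val.2 - b.val.2| else a.val.2 + b.val.2) = 0 := by
  rw [SeparationQuotient.mk_eq_mk, Metric.inseparable_iff, ← dist_mk_mk, SeparationQuotient.dist_mk]

end StarProof
namespace StarProof
open SeparationQuotient

theorem clamp_lip (c s t : ℝ) : |max 0 (min s c) - max 0 (min t c)| ≤ |s - t| := by
  rw [max_comm 0 (min s c), max_comm 0 (min t c)]
  refine (abs_max_sub_max_le_abs _ _ _).trans ?_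
  refine (abs_min_sub_min_le_max _ _ _ _).trans ?_
  simp

variable {k : ℕ} {L : ℕ → ℝ}

section Defs

/-- clamped edge index -/
def ec (k i : ℕ) : ℕ := max 1 (min i k)

theorem ec_one_le (i : ℕ) : 1 ≤ ec k i := le_max_left _ _
theorem ec_le (hk1 : 1 ≤ k) (i : ℕ) : ec k i ≤ k := max_le hk1 (min_le_right _ _)
theorem ec_eq {i : ℕ} (h1 : 1 ≤ i) (h2 : i ≤ k) : ec k i = i := by
  unfold ec; omega

variable (hk1 : 1 ≤ k) (hLpos : ∀ i, 1 ≤ i → i ≤ k → 0 < L i)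

include hk1 hLpos

/-- point on edge `i` (clamped) at clamped coordinate `s` -/
noncomputable def node (i : ℕ) (s : ℝ) : StarGraph k L :=
  mk ⟨(ec k i, max 0 (min s (L (ec k i)))),
    ec_one_le i, ec_le hk1 i, le_max_left _ _,
    max_le (hLpos _ (ec_one_le i) (ec_le hk1 i)).le (min_le_right _ _)⟩

theorem node_eq {i : ℕ} (h1 : 1 ≤ i) (h2 : i ≤ k) {s : ℝ} (hs0 : 0 ≤ s) (hsL : s ≤ L i)
    (h : 1 ≤ i ∧ i ≤ k ∧ 0 ≤ s ∧ s ≤ L i) :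
    node hk1 hLpos i s = mk (pt k L i s h) := by
  unfold node
  congr 1
  apply Subtype.ext
  show (ec k i, max 0 (min s (L (ec k i)))) = (i, s)
  rw [ec_eq h1 h2, min_eq_left hsL, max_eq_right hs0]

noncomputable def ctr : StarGraph k L := node hk1 hLpos 1 0

noncomputable def tip (i : ℕ) : StarGraph k L := node hk1 hLpos i (L i)

theorem ctr_eq (h : 1 ≤ 1 ∧ 1 ≤ k ∧ (0:ℝ) ≤ 0 ∧ (0:ℝ) ≤ L 1) :
    ctr hk1 hLpos = mk (pt k L 1 0 h) :=
  node_eq hk1 hLpos le_rfl hk1 le_rfl (hLpos 1 le_rfl hk1).le h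

theorem mk_zero_eq_ctr (a : StarPt k L) (ha : a.val.2 = 0) : mk a = ctr hk1 hLpos := by
  rw [ctr_eq hk1 hLpos ⟨le_rfl, hk1, le_rfl, (hLpos 1 le_rfl hk1).le⟩, mk_eq_iff]
  split_ifs <;> simp [ha]

theorem tip_eq {i : ℕ} (h1 : 1 ≤ i) (h2 : i ≤ k)
    (h : 1 ≤ i ∧ i ≤ k ∧ (0:ℝ) ≤ L i ∧ L i ≤ L i) :
    tip hk1 hLpos i = mk (pt k L i (L i) h) :=
  node_eq hk1 hLpos h1 h2 (hLpos i h1 h2).le le_rfl h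

/-- distance to the center is the coordinate -/
theorem dist_ctr (a : StarPt k L) : dist (mk a) (ctr hk1 hLpos) = a.val.2 := by
  rw [ctr_eq hk1 hLpos ⟨le_rfl, hk1, le_rfl, (hLpos 1 le_rfl hk1).le⟩, dist_mk_mk]
  split_ifs <;> simp [abs_of_nonneg a.prop.2.2.1]

theorem dist_tip {i : ℕ} (h1 : 1 ≤ i) (h2 : i ≤ k) (a : StarPt k L) :
    dist (mk a) (tip hk1 hLpos i) =
      if a.val.1 = i then L i - a.val.2 else a.val.2 + L i := by
  rw [tip_eq hk1 hLpos h1 h2 ⟨h1, h2, (hLpos i h1 h2).le, le_rfl⟩, dist_mk_mk]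
  simp only [pt_fst, pt_snd]
  split_ifs with h
  · rw [abs_of_nonpos (by have := a.prop.2.2.2; rw [h] at this; linarith)]; erw [if_pos h]; ring
  · erw [if_neg h]

theorem node_lipschitz (i : ℕ) (s t : ℝ) :
    dist (node hk1 hLpos i s) (node hk1 hLpos i t) ≤ |s - t| := by
  unfold node
  erw [dist_mk_mk, if_pos rfl]
  exact clamp_lip _ s t

theorem node_continuous (i : ℕ) : Continuous (fun s => node hk1 hLpos (L := L) i s) := by
  apply LipschitzWith.continuous (K := 1)
  apply LipschitzWith.of_dist_le_mul
  intro s t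
  simpa [Real.dist_eq] using node_lipschitz hk1 hLpos i s t

end Defs
end StarProof
namespace StarProof
open SeparationQuotient

variable {k : ℕ} {L : ℕ → ℝ}

/-- rescaling of a point of the star towards the center, factor clamped to `[0,1]` -/
noncomputable def scaleFun (c : ℝ) (a : StarPt k L) : StarPt k L :=
  pt k L a.val.1 (max 0 (min c 1) * a.val.2)
    ⟨a.prop.1, a.prop.2.1,
      mul_nonneg (le_max_left _ _) a.prop.2.2.1,
      le_trans (mul_le_of_le_one_left a.prop.2.2.1 (max_le zero_le_one (min_le_right _ _)))
        a.prop.2.2.2⟩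

noncomputable def scale (c : ℝ) : StarGraph k L → StarGraph k L :=
  SeparationQuotient.lift (fun a => mk (scaleFun c a)) (by
    intro a b hab
    rw [← SeparationQuotient.mk_eq_mk, mk_eq_iff] at hab
    rw [mk_eq_iff]
    unfold scaleFun
    simp only [pt_fst, pt_snd]
    split_ifs at hab ⊢ with h
    · erw [if_pos h]
      rw [← mul_sub, abs_mul, abs_of_nonneg (le_max_left (0:ℝ) (min c 1))]
      rw [hab, mul_zero]
    · erw [if_neg h]
      rw [← mul_add, hab, mul_zero])

theorem scale_mk (c : ℝ) (a : StarPt k L) : scale c (mk a) = mk (scaleFun c a) :=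
  SeparationQuotient.lift_mk _ _

theorem scaleFun_of_mem {c : ℝ} (h0 : 0 ≤ c) (h1 : c ≤ 1) (a : StarPt k L) :
    (scaleFun c a).val.2 = c * a.val.2 := by
  unfold scaleFun
  rw [pt_snd, min_eq_left h1, max_eq_right h0]

theorem scale_one (u : StarGraph k L) : scale 1 u = u := by
  obtain ⟨a, rfl⟩ := surjective_mk u
  rw [scale_mk, mk_eq_iff]
  unfold scaleFun
  simp

theorem scale_zero (hk1 : 1 ≤ k) (hLpos : ∀ i, 1 ≤ i → i ≤ k → 0 < L i) (u : StarGraph k L) :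
    scale 0 u = ctr hk1 hLpos := by
  obtain ⟨a, rfl⟩ := surjective_mk u
  rw [scale_mk]
  apply mk_zero_eq_ctr
  unfold scaleFun
  simp

theorem dist_scale_le (c : ℝ) (u v : StarGraph k L) :
    dist (scale c u) (scale c v) ≤ dist u v := by
  obtain ⟨a, rfl⟩ := surjective_mk u
  obtain ⟨b, rfl⟩ := surjective_mk v
  rw [scale_mk, scale_mk, dist_mk_mk, dist_mk_mk]
  unfold scaleFun
  simp only [pt_fst, pt_snd]
  have hc0 : 0 ≤ max 0 (min c 1) := le_max_left _ _
  have hc1 : max 0 (min c 1) ≤ 1 := max_le zero_le_one (min_le_right _ _)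
  have ha := a.prop.2.2.1
  have hb := b.prop.2.2.1
  split_ifs with h
  · erw [if_pos h]
    rw [← mul_sub, abs_mul, abs_of_nonneg hc0]
    calc max 0 (min c 1) * |a.val.2 - b.val.2| ≤ 1 * |a.val.2 - b.val.2| :=
          mul_le_mul_of_nonneg_right hc1 (abs_nonneg _)
      _ = _ := one_mul _
  · erw [if_neg h]
    rw [← mul_add]
    calc max 0 (min c 1) * (a.val.2 + b.val.2) ≤ 1 * (a.val.2 + b.val.2) :=
          mul_le_mul_of_nonneg_right hc1 (by linarith)
      _ = _ := one_mul _

theorem dist_scale_scale (c d : ℝ) (u : StarGraph k L) (hk1 : 1 ≤ k)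
    (hLpos : ∀ i, 1 ≤ i → i ≤ k → 0 < L i) :
    dist (scale c u) (scale d u) ≤ |c - d| * dist u (ctr hk1 hLpos) := by
  obtain ⟨a, rfl⟩ := surjective_mk u
  rw [scale_mk, scale_mk, dist_mk_mk, dist_ctr]
  unfold scaleFun
  simp only [pt_fst, pt_snd, if_pos rfl]
  rw [← sub_mul, abs_mul, abs_of_nonneg a.prop.2.2.1]
  apply mul_le_mul_of_nonneg_right _ a.prop.2.2.1
  have := clamp_lip 1 c d
  calc |max 0 (min c 1) - max 0 (min d 1)| ≤ |c - d| := clamp_lip 1 c d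

theorem scale_continuous (hk1 : 1 ≤ k) (hLpos : ∀ i, 1 ≤ i → i ≤ k → 0 < L i) :
    Continuous (fun z : ℝ × StarGraph k L => scale z.1 z.2) := by
  rw [Metric.continuous_iff]
  rintro ⟨c, u⟩ ε hε
  obtain ⟨M, hM⟩ : ∃ M, M = dist u (ctr hk1 hLpos) := ⟨_, rfl⟩
  have hM0 : 0 ≤ M := hM ▸ dist_nonneg
  have hM2 : (0:ℝ) < M + 2 := by linarith
  refine ⟨min 1 (ε / (M + 2)), by positivity, ?_⟩
  rintro ⟨d, v⟩ hlt
  simp only [Prod.dist_eq, max_lt_iff] at hlt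
  obtain ⟨hdc, hvu⟩ := hlt
  have h1 : dist (scale d v) (scale d u) ≤ dist v u := dist_scale_le d v u
  have h2 : dist (scale d u) (scale c u) ≤ |d - c| * M :=
    hM ▸ dist_scale_scale d c u hk1 hLpos
  have hdc' : |d - c| < min 1 (ε / (M + 2)) := by rwa [Real.dist_eq] at hdc
  have hd2 : |d - c| < ε / (M + 2) := lt_of_lt_of_le hdc' (min_le_right _ _)
  have hvu' : dist v u < ε / (M + 2) := lt_of_lt_of_le hvu (min_le_right _ _)
  have habs : 0 ≤ |d - c| := abs_nonneg _
  have hkey : ε / (M + 2) + (ε / (M + 2)) * (M + 1) = ε := by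
    field_simp
    ring
  calc dist (scale d v) (scale c u)
      ≤ dist (scale d v) (scale d u) + dist (scale d u) (scale c u) := dist_triangle _ _ _
    _ ≤ dist v u + |d - c| * M := by linarith
    _ < ε / (M + 2) + (ε / (M + 2)) * (M + 1) := by
        have hb : |d - c| * M ≤ |d - c| * (M + 1) := by nlinarith
        have h3 : |d - c| * (M + 1) < (ε / (M + 2)) * (M + 1) := by
          apply mul_lt_mul_of_pos_right hd2 (by linarith)
        linarith
    _ = ε := hkey
end StarProof
namespace StarProof
open SeparationQuotient

variable {k : ℕ} {L : ℕ → ℝ} {r : ℝ}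

/-- `v` lies on a geodesic between `u` and `w` -/
def Btw (u v w : StarGraph k L) : Prop := dist u w = dist u v + dist v w

section Sets
variable (hk1 : 1 ≤ k) (hLpos : ∀ i, 1 ≤ i → i ≤ k → 0 < L i) (r)

/-- the component where the first point is trapped above the second on edge 1 -/
def D1 : Set (ConfigSpace k L r) := {x | Btw x.val.2 x.val.1 (tip hk1 hLpos 1)}

/-- the component where the second point is trapped above the first on edge 1 -/
def D2 : Set (ConfigSpace k L r) := {x | Btw x.val.1 x.val.2 (tip hk1 hLpos 1)}

/-- the component where the two points are strictly on the fixed distinct edges `i`, `j` -/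
def FlapSet (i j : ℕ) : Set (ConfigSpace k L r) :=
  {x | Btw x.val.2 x.val.1 (tip hk1 hLpos i) ∧ Btw x.val.1 x.val.2 (tip hk1 hLpos j)}

theorem continuous_val1 : Continuous (fun x : ConfigSpace k L r => x.val.1) :=
  continuous_fst.comp continuous_subtype_val

theorem continuous_val2 : Continuous (fun x : ConfigSpace k L r => x.val.2) :=
  continuous_snd.comp continuous_subtype_val

theorem isClosed_btw_set (w : StarGraph k L)
    (f g : ConfigSpace k L r → StarGraph k L) (hf : Continuous f) (hg : Continuous g) :
    IsClosed {x | Btw (f x) (g x) w} :=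
  isClosed_eq (hf.dist continuous_const)
    ((hf.dist hg).add (hg.dist continuous_const))

theorem isClosed_D1 : IsClosed (D1 r hk1 hLpos) :=
  isClosed_btw_set _ _ _ _ (continuous_val2 r) (continuous_val1 r)

theorem isClosed_D2 : IsClosed (D2 r hk1 hLpos) :=
  isClosed_btw_set _ _ _ _ (continuous_val1 r) (continuous_val2 r)

theorem isClosed_FlapSet (i j : ℕ) : IsClosed (FlapSet r hk1 hLpos i j) :=
  IsClosed.inter (isClosed_btw_set _ _ _ _ (continuous_val2 r) (continuous_val1 r))
    (isClosed_btw_set _ _ _ _ (continuous_val1 r) (continuous_val2 r))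

end Sets
end StarProof
namespace StarProof
open SeparationQuotient

variable {k : ℕ} {L : ℕ → ℝ} {r : ℝ}

theorem flap_struct (hk1 : 1 ≤ k) (hLpos : ∀ i, 1 ≤ i → i ≤ k → 0 < L i) (hr : 0 < r)
    {i j : ℕ} (h1i : 1 ≤ i) (hik : i ≤ k) (h1j : 1 ≤ j) (hjk : j ≤ k) (hij : i ≠ j)
    (hLi : L i < r) (hLj : L j < r) {x : ConfigSpace k L r}
    (hx : x ∈ FlapSet r hk1 hLpos i j) :
    ∃ (s t : ℝ) (hs : 1 ≤ i ∧ i ≤ k ∧ 0 ≤ s ∧ s ≤ L i) (ht : 1 ≤ j ∧ j ≤ k ∧ 0 ≤ t ∧ t ≤ L j),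
      0 < s ∧ 0 < t ∧ r ≤ s + t ∧
      x.val.1 = mk (pt k L i s hs) ∧ x.val.2 = mk (pt k L j t ht) := by
  obtain ⟨hx1, hx2⟩ := hx
  have hcfg := x.prop
  obtain ⟨a, ha⟩ := surjective_mk x.val.1
  obtain ⟨b, hb⟩ := surjective_mk x.val.2
  unfold Btw at hx1 hx2
  rw [← ha, ← hb] at hx1 hx2 hcfg
  rw [dist_comm (mk a) (mk b)] at hx2 hcfg
  rw [dist_tip hk1 hLpos h1i hik, dist_mk_mk, dist_tip hk1 hLpos h1i hik] at hx1
  rw [dist_tip hk1 hLpos h1j hjk, dist_mk_mk, dist_tip hk1 hLpos h1j hjk] at hx2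
  rw [dist_mk_mk] at hcfg
  obtain ⟨ha1, hak, hs0, hsL⟩ := a.prop
  obtain ⟨hb1, hbk, ht0, htL⟩ := b.prop
  by_cases hA : b.val.1 = a.val.1
  · exfalso
    rw [if_pos hA] at hx1 hx2 hcfg
    by_cases hB : a.val.1 = i
    · have hC : b.val.1 = i := hA.trans hB
      rw [hB] at hsL
      rw [if_pos hB, if_pos hC] at hx1
      rcases abs_cases (b.val.2 - a.val.2) with ⟨h5, h6⟩ | ⟨h5, h6⟩ <;> linarith
    · have hC : ¬ b.val.1 = i := fun h => hB (hA.symm.trans h)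
      rw [if_neg hB, if_neg hC] at hx1
      by_cases hD : a.val.1 = j
      · have hE : b.val.1 = j := hA.trans hD
        rw [hD] at hsL; rw [hE] at htL
        rw [if_pos hD, if_pos hE] at hx2
        rcases abs_cases (b.val.2 - a.val.2) with ⟨h5, h6⟩ | ⟨h5, h6⟩ <;> linarith
      · have hE : ¬ b.val.1 = j := fun h => hD (hA.symm.trans h)
        rw [if_neg hD, if_neg hE] at hx2
        rcases abs_cases (b.val.2 - a.val.2) with ⟨h5, h6⟩ | ⟨h5, h6⟩ <;> linarith
  · rw [if_neg hA] at hx1 hx2 hcfg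
    by_cases hB : a.val.1 = i
    · by_cases hE : b.val.1 = j
      · -- the good case
        rw [hB] at hsL; rw [hE] at htL
        have hs' : 0 < a.val.2 := by
          rcases lt_or_ge 0 a.val.2 with h | h
          · exact h
          · exfalso; linarith
        have ht' : 0 < b.val.2 := by
          rcases lt_or_ge 0 b.val.2 with h | h
          · exact h
          · exfalso; linarith
        refine ⟨a.val.2, b.val.2, ⟨h1i, hik, hs0, hsL⟩, ⟨h1j, hjk, ht0, htL⟩,
          hs', ht', by linarith, ?_, ?_⟩
        · rw [← ha]; congr 1; apply Subtype.ext
          exact Prod.ext hB rfl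
        · rw [← hb]; congr 1; apply Subtype.ext
          exact Prod.ext hE rfl
      · exfalso
        have hC : ¬ b.val.1 = i := fun h => hA (h.trans hB.symm)
        have hD : ¬ a.val.1 = j := fun h => hij (hB.symm.trans h)
        rw [if_pos hB] at hx1
        rw [if_neg hC] at hx1
        rw [if_neg hD, if_neg hE] at hx2
        rw [hB] at hsL
        linarith
    · exfalso
      by_cases hC : b.val.1 = i
      · have hE : ¬ b.val.1 = j := fun h => hij (hC.symm.trans h)
        rw [if_neg hB, if_pos hC] at hx1
        rw [if_neg hE] at hx2
        by_cases hD : a.val.1 = j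
        · rw [if_pos hD] at hx2; linarith
        · rw [if_neg hD] at hx2; linarith
      · rw [if_neg hB, if_neg hC] at hx1
        by_cases hE : b.val.1 = j
        · have hD : ¬ a.val.1 = j := fun h => hA (hE.trans h.symm)
          rw [if_neg hD, if_pos hE] at hx2
          rw [hE] at htL
          linarith
        · by_cases hD : a.val.1 = j
          · rw [if_pos hD, if_neg hE] at hx2
            rw [hD] at hsL
            linarith
          · rw [if_neg hD, if_neg hE] at hx2
            linarith

theorem d1_struct (hk1 : 1 ≤ k) (hLpos : ∀ i, 1 ≤ i → i ≤ k → 0 < L i) (hr : 0 < r)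
    (hrL : ∀ i, 2 ≤ i → i ≤ k → L i < r) {x : ConfigSpace k L r}
    (hx : x ∈ D1 r hk1 hLpos) :
    ∃ (s : ℝ) (hs : 1 ≤ 1 ∧ 1 ≤ k ∧ 0 ≤ s ∧ s ≤ L 1),
      0 < s ∧ x.val.1 = mk (pt k L 1 s hs) := by
  have hx1 : Btw x.val.2 x.val.1 (tip hk1 hLpos 1) := hx
  have hcfg := x.prop
  obtain ⟨a, ha⟩ := surjective_mk x.val.1
  obtain ⟨b, hb⟩ := surjective_mk x.val.2
  unfold Btw at hx1
  rw [← ha, ← hb] at hx1 hcfg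
  rw [dist_comm (mk a) (mk b)] at hcfg
  rw [dist_tip hk1 hLpos le_rfl hk1, dist_mk_mk, dist_tip hk1 hLpos le_rfl hk1] at hx1
  rw [dist_mk_mk] at hcfg
  obtain ⟨ha1, hak, hs0, hsL⟩ := a.prop
  obtain ⟨hb1, hbk, ht0, htL⟩ := b.prop
  by_cases hB : a.val.1 = 1
  · have hs' : 0 < a.val.2 := by
      rcases lt_or_ge 0 a.val.2 with h | h
      · exact h
      · exfalso
        have hs0' : a.val.2 = 0 := le_antisymm h hs0
        by_cases hE : b.val.1 = 1
        · rw [if_pos hE, if_pos hB] at hx1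
          by_cases hA : b.val.1 = a.val.1
          · rw [if_pos hA] at hx1 hcfg
            rw [hs0'] at hx1 hcfg
            rcases abs_cases (b.val.2 - 0) with ⟨h5, h6⟩ | ⟨h5, h6⟩ <;>
              rw [h5] at hx1 hcfg <;> linarith [htL, hrL]
          · exact hA (hE.trans hB.symm)
        · have hb2 : 2 ≤ b.val.1 := by omega
          have hbr : L b.val.1 < r := hrL _ hb2 hbk
          have hA : ¬ b.val.1 = a.val.1 := fun h => hE (h.trans hB)
          rw [if_neg hE, if_neg hA] at hx1
          rw [if_neg hA] at hcfg
          rw [hs0'] at hcfg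
          linarith
    rw [hB] at hsL
    refine ⟨a.val.2, ⟨le_rfl, hk1, hs0, hsL⟩, hs', ?_⟩
    rw [← ha]; congr 1; apply Subtype.ext
    exact Prod.ext hB rfl
  · exfalso
    rw [if_neg hB] at hx1
    by_cases hE : b.val.1 = 1
    · rw [if_pos hE] at hx1
      by_cases hA : b.val.1 = a.val.1
      · exact hB (hA.symm.trans hE)
      · rw [if_neg hA] at hx1 hcfg
        linarith
    · rw [if_neg hE] at hx1
      by_cases hA : b.val.1 = a.val.1
      · rw [if_pos hA] at hx1 hcfg
        have hb2 : 2 ≤ b.val.1 := by omega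
        have hbr : L b.val.1 < r := hrL _ hb2 hbk
        rcases abs_cases (b.val.2 - a.val.2) with ⟨h5, h6⟩ | ⟨h5, h6⟩ <;>
          rw [h5] at hx1 hcfg <;> linarith
      · rw [if_neg hA] at hx1 hcfg
        have hs0' : a.val.2 = 0 := by linarith
        have hb2 : 2 ≤ b.val.1 := by omega
        have hbr : L b.val.1 < r := hrL _ hb2 hbk
        rw [hs0'] at hcfg
        linarith

end StarProof
namespace StarProof
open SeparationQuotient

variable {k : ℕ} {L : ℕ → ℝ} {r : ℝ}

theorem dist_pt_tip (hk1 : 1 ≤ k) (hLpos : ∀ i, 1 ≤ i → i ≤ k → 0 < L i)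
    {i : ℕ} (h1 : 1 ≤ i) (h2 : i ≤ k) (i' : ℕ) (s : ℝ) (h) :
    dist (mk (pt k L i' s h)) (tip hk1 hLpos i) = if i' = i then L i - s else s + L i :=
  dist_tip hk1 hLpos h1 h2 _

theorem dist_pt_pt (i : ℕ) (s : ℝ) (h) (j : ℕ) (t : ℝ) (h') :
    dist (mk (pt k L i s h)) (mk (pt k L j t h')) = if i = j then |s - t| else s + t :=
  dist_mk_mk _ _

theorem mem_flap_of (hk1 : 1 ≤ k) (hLpos : ∀ i, 1 ≤ i → i ≤ k → 0 < L i)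
    {i j : ℕ} (h1i : 1 ≤ i) (hik : i ≤ k) (h1j : 1 ≤ j) (hjk : j ≤ k) (hij : i ≠ j)
    {x : ConfigSpace k L r} {s t : ℝ} {hs} {ht}
    (hx1 : x.val.1 = mk (pt k L i s hs)) (hx2 : x.val.2 = mk (pt k L j t ht)) :
    x ∈ FlapSet r hk1 hLpos i j := by
  have hji : ¬ j = i := fun h => hij h.symm
  refine ⟨?_, ?_⟩ <;> unfold Btw
  · rw [hx1, hx2, dist_pt_tip hk1 hLpos h1i hik, dist_pt_tip hk1 hLpos h1i hik, dist_pt_pt,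
      if_neg hji, if_pos rfl, if_neg hji]
    ring
  · rw [hx1, hx2, dist_pt_tip hk1 hLpos h1j hjk, dist_pt_tip hk1 hLpos h1j hjk, dist_pt_pt,
      if_pos rfl, if_neg hij, if_neg hij]
    ring

theorem mem_D1_of (hk1 : 1 ≤ k) (hLpos : ∀ i, 1 ≤ i → i ≤ k → 0 < L i)
    {x : ConfigSpace k L r} {s : ℝ} {hs} (b : StarPt k L)
    (hx1 : x.val.1 = mk (pt k L 1 s hs)) (hx2 : x.val.2 = mk b)
    (hcase : ¬ b.val.1 = 1 ∨ b.val.2 ≤ s) :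
    x ∈ D1 r hk1 hLpos := by
  have hbt := b.prop.2.2.1
  have hsl : s ≤ L 1 := hs.2.2.2
  show Btw x.val.2 x.val.1 (tip hk1 hLpos 1)
  unfold Btw
  have e1 : dist (mk b) (tip hk1 hLpos 1) = if b.val.1 = 1 then L 1 - b.val.2
      else b.val.2 + L 1 := dist_tip hk1 hLpos le_rfl hk1 _
  have e2 : dist (mk b) (mk (pt k L 1 s hs)) = if b.val.1 = 1 then |b.val.2 - s|
      else b.val.2 + s := dist_mk_mk _ _
  have e3 : dist (mk (pt k L 1 s hs)) (tip hk1 hLpos 1) = L 1 - s := by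
    rw [dist_pt_tip hk1 hLpos le_rfl hk1, if_pos rfl]
  rw [hx1, hx2, e1, e2, e3]
  by_cases hb : b.val.1 = 1
  · have hts : b.val.2 ≤ s := by
      rcases hcase with h | h
      · exact absurd hb h
      · exact h
    rw [if_pos hb, if_pos hb, abs_of_nonpos (by linarith : b.val.2 - s ≤ 0)]
    ring
  · rw [if_neg hb, if_neg hb]
    ring

/-- swapping the two points of a configuration -/
def swapCfg (x : ConfigSpace k L r) : ConfigSpace k L r :=
  ⟨(x.val.2, x.val.1), by rw [dist_comm]; exact x.prop⟩

theorem mem_D2_iff (hk1 : 1 ≤ k) (hLpos : ∀ i, 1 ≤ i → i ≤ k → 0 < L i)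
    (x : ConfigSpace k L r) :
    x ∈ D2 r hk1 hLpos ↔ swapCfg x ∈ D1 r hk1 hLpos := Iff.rfl

theorem classify (hk1 : 1 ≤ k) (hLpos : ∀ i, 1 ≤ i → i ≤ k → 0 < L i) (hr : 0 < r)
    (hrL : ∀ i, 2 ≤ i → i ≤ k → L i < r) (x : ConfigSpace k L r) :
    x ∈ D1 r hk1 hLpos ∨ x ∈ D2 r hk1 hLpos ∨
      ∃ i j, 2 ≤ i ∧ i ≤ k ∧ 2 ≤ j ∧ j ≤ k ∧ i ≠ j ∧ x ∈ FlapSet r hk1 hLpos i j := by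
  have hcfg := x.prop
  obtain ⟨a, ha⟩ := surjective_mk x.val.1
  obtain ⟨b, hb⟩ := surjective_mk x.val.2
  obtain ⟨ha1, hak, hs0, hsL⟩ := a.prop
  obtain ⟨hb1, hbk, ht0, htL⟩ := b.prop
  have hd : dist x.val.1 x.val.2 =
      if a.val.1 = b.val.1 then |a.val.2 - b.val.2| else a.val.2 + b.val.2 := by
    rw [← ha, ← hb, dist_mk_mk]
  -- helper equalities
  have hpa : ∀ (h1 : 1 ≤ a.val.1) (h2 : a.val.1 ≤ k),
      (mk a : StarGraph k L) = mk (pt k L a.val.1 a.val.2 ⟨h1, h2, hs0, hsL⟩) := by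
    intro h1 h2; rfl
  have hpb : ∀ (h1 : 1 ≤ b.val.1) (h2 : b.val.1 ≤ k),
      (mk b : StarGraph k L) = mk (pt k L b.val.1 b.val.2 ⟨h1, h2, ht0, htL⟩) := by
    intro h1 h2; rfl
  by_cases hA : a.val.1 = b.val.1
  · -- same edge : edge 1 and one above the other
    rw [if_pos hA] at hd
    rcases le_total a.val.2 b.val.2 with hle | hle
    · right; left
      rw [mem_D2_iff]
      have hb1' : b.val.1 = 1 := by
        by_contra hne
        have : L b.val.1 < r := hrL _ (by omega) hbk
        have : |a.val.2 - b.val.2| < r := by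
          rw [abs_of_nonpos (by linarith)]
          linarith
        linarith [hcfg, hd ▸ hcfg]
      refine mem_D1_of hk1 hLpos (x := swapCfg x)
        (s := b.val.2) (hs := ⟨le_rfl, hk1, ht0, htL.trans (le_of_eq (congrArg L hb1'))⟩)
        (b := a) ?_ ?_ ?_
      · show x.val.2 = _
        rw [← hb, hpb hb1 hbk]
        congr 1
        apply Subtype.ext
        exact Prod.ext hb1' rfl
      · show x.val.1 = mk a
        exact ha.symm
      · right; exact hle
    · left
      have ha1' : a.val.1 = 1 := by
        by_contra hne
        have : L a.val.1 < r := hrL _ (by omega) hak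
        have : |a.val.2 - b.val.2| < r := by
          rw [abs_of_nonneg (by linarith)]
          linarith
        linarith [hd ▸ hcfg]
      refine mem_D1_of hk1 hLpos
        (s := a.val.2) (hs := ⟨le_rfl, hk1, hs0, hsL.trans (le_of_eq (congrArg L ha1'))⟩)
        (b := b) ?_ ?_ ?_
      · rw [← ha, hpa ha1 hak]
        congr 1
        apply Subtype.ext
        exact Prod.ext ha1' rfl
      · exact hb.symm
      · right; exact hle
  · rw [if_neg hA] at hd
    have hsum : r ≤ a.val.2 + b.val.2 := hd ▸ hcfg
    by_cases hs0' : a.val.2 = 0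
    · -- first point at the center: second is deep on edge 1
      right; left
      rw [mem_D2_iff]
      have hbr : r ≤ b.val.2 := by rw [hs0'] at hsum; linarith
      have hb1' : b.val.1 = 1 := by
        by_contra hne
        have : L b.val.1 < r := hrL _ (by omega) hbk
        linarith
      refine mem_D1_of hk1 hLpos (x := swapCfg x)
        (s := b.val.2) (hs := ⟨le_rfl, hk1, ht0, htL.trans (le_of_eq (congrArg L hb1'))⟩)
        (b := a) ?_ ?_ ?_
      · show x.val.2 = _
        rw [← hb, hpb hb1 hbk]
        congr 1
        apply Subtype.ext
        exact Prod.ext hb1' rfl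
      · exact ha.symm
      · right; rw [hs0']; linarith
    · by_cases ht0' : b.val.2 = 0
      · left
        have har : r ≤ a.val.2 := by rw [ht0'] at hsum; linarith
        have ha1' : a.val.1 = 1 := by
          by_contra hne
          have : L a.val.1 < r := hrL _ (by omega) hak
          linarith
        refine mem_D1_of hk1 hLpos
          (s := a.val.2) (hs := ⟨le_rfl, hk1, hs0, hsL.trans (le_of_eq (congrArg L ha1'))⟩)
          (b := b) ?_ ?_ ?_
        · rw [← ha, hpa ha1 hak]
          congr 1
          apply Subtype.ext
          exact Prod.ext ha1' rfl
        · exact hb.symm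
        · right; rw [ht0']; linarith
      · -- both coordinates positive, distinct edges
        by_cases hA1 : a.val.1 = 1
        · left
          refine mem_D1_of hk1 hLpos
            (s := a.val.2) (hs := ⟨le_rfl, hk1, hs0, hsL.trans (le_of_eq (congrArg L hA1))⟩)
            (b := b) ?_ ?_ ?_
          · rw [← ha, hpa ha1 hak]
            congr 1
            apply Subtype.ext
            exact Prod.ext hA1 rfl
          · exact hb.symm
          · left; intro h; exact hA (hA1.trans h.symm)
        · by_cases hB1 : b.val.1 = 1
          · right; left
            rw [mem_D2_iff]
            refine mem_D1_of hk1 hLpos (x := swapCfg x)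
              (s := b.val.2) (hs := ⟨le_rfl, hk1, ht0, htL.trans (le_of_eq (congrArg L hB1))⟩)
              (b := a) ?_ ?_ ?_
            · show x.val.2 = _
              rw [← hb, hpb hb1 hbk]
              congr 1
              apply Subtype.ext
              exact Prod.ext hB1 rfl
            · exact ha.symm
            · left; exact hA1
          · right; right
            refine ⟨a.val.1, b.val.1, by omega, hak, by omega, hbk, hA, ?_⟩
            exact mem_flap_of hk1 hLpos ha1 hak hb1 hbk hA
              (s := a.val.2) (hs := ⟨ha1, hak, hs0, hsL⟩)
              (t := b.val.2) (ht := ⟨hb1, hbk, ht0, htL⟩)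
              (by rw [← ha, hpa ha1 hak]) (by rw [← hb, hpb hb1 hbk])

end StarProof
namespace StarProof
open SeparationQuotient unitInterval

variable {k : ℕ} {L : ℕ → ℝ} {r : ℝ}

section FlapCon
variable (hk1 : 1 ≤ k) (hLpos : ∀ i, 1 ≤ i → i ≤ k → 0 < L i)

/-- the straight-line deformation pushing both points of a flap configuration to the tips -/
noncomputable def flapMap (i j : ℕ) (u : ℝ) (y : ConfigSpace k L r) :
    StarGraph k L × StarGraph k L :=
  (node hk1 hLpos i ((1 - u) * dist y.val.1 (ctr hk1 hLpos) + u * L i),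
   node hk1 hLpos j ((1 - u) * dist y.val.2 (ctr hk1 hLpos) + u * L j))

theorem flapMap_spec (hr : 0 < r)
    {i j : ℕ} (h1i : 1 ≤ i) (hik : i ≤ k) (h1j : 1 ≤ j) (hjk : j ≤ k) (hij : i ≠ j)
    (hLi : L i < r) (hLj : L j < r) {u : ℝ} (hu0 : 0 ≤ u) (hu1 : u ≤ 1)
    {y : ConfigSpace k L r} (hy : y ∈ FlapSet r hk1 hLpos i j) :
    r ≤ dist (flapMap hk1 hLpos i j u y).1 (flapMap hk1 hLpos i j u y).2 ∧
    ∀ (h : r ≤ dist (flapMap hk1 hLpos i j u y).1 (flapMap hk1 hLpos i j u y).2),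
      (⟨flapMap hk1 hLpos i j u y, h⟩ : ConfigSpace k L r) ∈ FlapSet r hk1 hLpos i j := by
  obtain ⟨s, t, hs, ht, hs0, ht0, hrst, hx1, hx2⟩ :=
    flap_struct hk1 hLpos hr h1i hik h1j hjk hij hLi hLj hy
  have e1 : dist y.val.1 (ctr hk1 hLpos) = s := by rw [hx1]; exact dist_ctr hk1 hLpos _
  have e2 : dist y.val.2 (ctr hk1 hLpos) = t := by rw [hx2]; exact dist_ctr hk1 hLpos _
  have hsL := hs.2.2.2
  have htL := ht.2.2.2
  have hA : (1 - u) * dist y.val.1 (ctr hk1 hLpos) + u * L i = (1 - u) * s + u * L i := by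
    rw [e1]
  have hB : (1 - u) * dist y.val.2 (ctr hk1 hLpos) + u * L j = (1 - u) * t + u * L j := by
    rw [e2]
  have hA1 : s ≤ (1 - u) * s + u * L i := by nlinarith
  have hA2 : (1 - u) * s + u * L i ≤ L i := by nlinarith
  have hB1 : t ≤ (1 - u) * t + u * L j := by nlinarith
  have hB2 : (1 - u) * t + u * L j ≤ L j := by nlinarith
  have hA0 : 0 ≤ (1 - u) * s + u * L i := le_trans hs.2.2.1 hA1
  have hB0 : 0 ≤ (1 - u) * t + u * L j := le_trans ht.2.2.1 hB1
  have n1 : (flapMap hk1 hLpos i j u y).1 =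
      mk (pt k L i ((1 - u) * s + u * L i) ⟨h1i, hik, hA0, hA2⟩) := by
    show node hk1 hLpos i _ = _
    rw [hA]
    exact node_eq hk1 hLpos h1i hik hA0 hA2 _
  have n2 : (flapMap hk1 hLpos i j u y).2 =
      mk (pt k L j ((1 - u) * t + u * L j) ⟨h1j, hjk, hB0, hB2⟩) := by
    show node hk1 hLpos j _ = _
    rw [hB]
    exact node_eq hk1 hLpos h1j hjk hB0 hB2 _
  constructor
  · rw [n1, n2, dist_pt_pt, if_neg hij]
    linarith
  · intro h
    exact mem_flap_of hk1 hLpos h1i hik h1j hjk hij (x := ⟨flapMap hk1 hLpos i j u y, h⟩) n1 n2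

theorem flapMap_zero (hr : 0 < r)
    {i j : ℕ} (h1i : 1 ≤ i) (hik : i ≤ k) (h1j : 1 ≤ j) (hjk : j ≤ k) (hij : i ≠ j)
    (hLi : L i < r) (hLj : L j < r)
    {y : ConfigSpace k L r} (hy : y ∈ FlapSet r hk1 hLpos i j) :
    flapMap hk1 hLpos i j 0 y = y.val := by
  obtain ⟨s, t, hs, ht, hs0, ht0, hrst, hx1, hx2⟩ :=
    flap_struct hk1 hLpos hr h1i hik h1j hjk hij hLi hLj hy
  have e1 : dist y.val.1 (ctr hk1 hLpos) = s := by rw [hx1]; exact dist_ctr hk1 hLpos _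
  have e2 : dist y.val.2 (ctr hk1 hLpos) = t := by rw [hx2]; exact dist_ctr hk1 hLpos _
  unfold flapMap
  rw [e1, e2]
  apply Prod.ext
  · show node hk1 hLpos i ((1 - 0) * s + 0 * L i) = y.val.1
    have : (1 - 0 : ℝ) * s + 0 * L i = s := by ring
    rw [this, hx1]
    exact node_eq hk1 hLpos h1i hik hs.2.2.1 hs.2.2.2 _
  · show node hk1 hLpos j ((1 - 0) * t + 0 * L j) = y.val.2
    have : (1 - 0 : ℝ) * t + 0 * L j = t := by ring
    rw [this, hx2]
    exact node_eq hk1 hLpos h1j hjk ht.2.2.1 ht.2.2.2 _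

theorem flapMap_one (i j : ℕ) (y : ConfigSpace k L r) :
    flapMap hk1 hLpos i j 1 y = (tip hk1 hLpos i, tip hk1 hLpos j) := by
  unfold flapMap tip
  have h1 : (1 - 1 : ℝ) * dist y.val.1 (ctr hk1 hLpos) + 1 * L i = L i := by ring
  have h2 : (1 - 1 : ℝ) * dist y.val.2 (ctr hk1 hLpos) + 1 * L j = L j := by ring
  rw [h1, h2]

theorem flap_contractible (hr : 0 < r)
    {i j : ℕ} (h1i : 1 ≤ i) (hik : i ≤ k) (h1j : 1 ≤ j) (hjk : j ≤ k) (hij : i ≠ j)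
    (hLi : L i < r) (hLj : L j < r) (x0 : ConfigSpace k L r)
    (hx0 : x0 ∈ FlapSet r hk1 hLpos i j) :
    ContractibleSpace (FlapSet r hk1 hLpos i j) := by
  have hLi0 := hLpos i h1i hik
  have hLj0 := hLpos j h1j hjk
  have hsum : r ≤ L i + L j := by
    obtain ⟨s, t, hs, ht, _, _, hrst, _, _⟩ := flap_struct hk1 hLpos hr h1i hik h1j hjk hij
      hLi hLj hx0
    have := hs.2.2.2
    have := ht.2.2.2
    linarith
  have hcd : r ≤ dist (tip hk1 hLpos i) (tip hk1 hLpos j) := by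
    rw [tip_eq hk1 hLpos h1i hik ⟨h1i, hik, hLi0.le, le_rfl⟩,
      tip_eq hk1 hLpos h1j hjk ⟨h1j, hjk, hLj0.le, le_rfl⟩, dist_pt_pt, if_neg hij]
    exact hsum
  have hcmem : (⟨(tip hk1 hLpos i, tip hk1 hLpos j), hcd⟩ : ConfigSpace k L r) ∈
      FlapSet r hk1 hLpos i j := by
    apply mem_flap_of hk1 hLpos h1i hik h1j hjk hij
      (s := L i) (hs := ⟨h1i, hik, hLi0.le, le_rfl⟩)
      (t := L j) (ht := ⟨h1j, hjk, hLj0.le, le_rfl⟩)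
    · exact tip_eq hk1 hLpos h1i hik _
    · exact tip_eq hk1 hLpos h1j hjk _
  rw [contractible_iff_id_nullhomotopic]
  refine ⟨⟨⟨(tip hk1 hLpos i, tip hk1 hLpos j), hcd⟩, hcmem⟩, ⟨⟨⟨fun z =>
    ⟨⟨flapMap hk1 hLpos i j (z.1 : ℝ) z.2.val,
      (flapMap_spec hk1 hLpos hr h1i hik h1j hjk hij hLi hLj z.1.prop.1 z.1.prop.2
        z.2.prop).1⟩,
      (flapMap_spec hk1 hLpos hr h1i hik h1j hjk hij hLi hLj z.1.prop.1 z.1.prop.2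
        z.2.prop).2 _⟩, ?_⟩, ?_, ?_⟩⟩⟩
  · -- continuity
    apply Continuous.subtype_mk
    apply Continuous.subtype_mk
    have cu : Continuous fun z : I × (FlapSet r hk1 hLpos i j) => (z.1 : ℝ) :=
      continuous_subtype_val.comp continuous_fst
    have cy : Continuous fun z : I × (FlapSet r hk1 hLpos i j) =>
        (z.2 : ConfigSpace k L r).val :=
      continuous_subtype_val.comp (continuous_subtype_val.comp continuous_snd)
    have c1 : Continuous fun z : I × (FlapSet r hk1 hLpos i j) =>
        dist (z.2 : ConfigSpace k L r).val.1 (ctr hk1 hLpos) :=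
      (Continuous.fst cy).dist continuous_const
    have c2 : Continuous fun z : I × (FlapSet r hk1 hLpos i j) =>
        dist (z.2 : ConfigSpace k L r).val.2 (ctr hk1 hLpos) :=
      (Continuous.snd cy).dist continuous_const
    apply Continuous.prodMk
    · exact (node_continuous hk1 hLpos i).comp
        (((continuous_const.sub cu).mul c1).add (cu.mul continuous_const))
    · exact (node_continuous hk1 hLpos j).comp
        (((continuous_const.sub cu).mul c2).add (cu.mul continuous_const))
  · -- map_zero_left
    intro y
    apply Subtype.ext
    apply Subtype.ext
    show flapMap hk1 hLpos i j ((0 : I) : ℝ) y.val = (ContinuousMap.id _ y).val.val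
    rw [Set.Icc.coe_zero]
    exact flapMap_zero hk1 hLpos hr h1i hik h1j hjk hij hLi hLj y.prop
  · -- map_one_left
    intro y
    apply Subtype.ext
    apply Subtype.ext
    show flapMap hk1 hLpos i j ((1 : I) : ℝ) y.val = _
    rw [Set.Icc.coe_one]
    exact flapMap_one hk1 hLpos i j y.val

end FlapCon
end StarProof
namespace StarProof
open SeparationQuotient unitInterval

variable {k : ℕ} {L : ℕ → ℝ} {r : ℝ}

section D1Con
variable (hk1 : 1 ≤ k) (hLpos : ∀ i, 1 ≤ i → i ≤ k → 0 < L i)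

/-- deformation of `D1`: first push the first point to the tip of edge 1,
then retract the second point to the center -/
noncomputable def d1Map (u : ℝ) (y : ConfigSpace k L r) :
    StarGraph k L × StarGraph k L :=
  (node hk1 hLpos 1 (dist y.val.1 (ctr hk1 hLpos) +
      min (2 * u) 1 * (L 1 - dist y.val.1 (ctr hk1 hLpos))),
   scale (1 - max (2 * u - 1) 0) y.val.2)

theorem d1Map_spec (hr : 0 < r) (hrL : ∀ i, 2 ≤ i → i ≤ k → L i < r) (hge : r ≤ L 1)
    {u : ℝ} (hu0 : 0 ≤ u) (hu1 : u ≤ 1)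
    {y : ConfigSpace k L r} (hy : y ∈ D1 r hk1 hLpos) :
    r ≤ dist (d1Map hk1 hLpos u y).1 (d1Map hk1 hLpos u y).2 ∧
    ∀ (h : r ≤ dist (d1Map hk1 hLpos u y).1 (d1Map hk1 hLpos u y).2),
      (⟨d1Map hk1 hLpos u y, h⟩ : ConfigSpace k L r) ∈ D1 r hk1 hLpos := by
  obtain ⟨s, hs, hspos, hx1⟩ := d1_struct hk1 hLpos hr hrL hy
  have hsL : s ≤ L 1 := hs.2.2.2
  have hs0 : 0 ≤ s := hs.2.2.1
  have e1 : dist y.val.1 (ctr hk1 hLpos) = s := by rw [hx1]; exact dist_ctr hk1 hLpos _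
  obtain ⟨b, hb⟩ := surjective_mk y.val.2
  have ht0 : 0 ≤ b.val.2 := b.prop.2.2.1
  have htL : b.val.2 ≤ L b.val.1 := b.prop.2.2.2
  -- parameters
  have hm0 : 0 ≤ min (2 * u) 1 := le_min (by linarith) zero_le_one
  have hm1 : min (2 * u) 1 ≤ 1 := min_le_right _ _
  have hw0 : 0 ≤ max (2 * u - 1) 0 := le_max_right _ _
  have hw1 : max (2 * u - 1) 0 ≤ 1 := max_le (by linarith) zero_le_one
  have hl0 : 0 ≤ 1 - max (2 * u - 1) 0 := by linarith
  have hl1 : 1 - max (2 * u - 1) 0 ≤ 1 := by linarith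
  set m := min (2 * u) 1 with hmdef
  set w := max (2 * u - 1) 0 with hwdef
  set A := s + m * (L 1 - s) with hAdef
  have hA1 : s ≤ A := by nlinarith
  have hA2 : A ≤ L 1 := by nlinarith
  have hA0 : 0 ≤ A := le_trans hs0 hA1
  have n1 : (d1Map hk1 hLpos u y).1 = mk (pt k L 1 A ⟨le_rfl, hk1, hA0, hA2⟩) := by
    show node hk1 hLpos 1 _ = _
    rw [e1]
    exact node_eq hk1 hLpos le_rfl hk1 hA0 hA2 _
  have n2 : (d1Map hk1 hLpos u y).2 = mk (scaleFun (1 - w) b) := by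
    show scale (1 - w) y.val.2 = _
    rw [← hb, scale_mk]
  have hsf1 : (scaleFun (1 - w) b).val.1 = b.val.1 := rfl
  have hsf2 : (scaleFun (1 - w) b).val.2 = (1 - w) * b.val.2 := scaleFun_of_mem hl0 hl1 b
  have hlt : (1 - w) * b.val.2 ≤ b.val.2 := by nlinarith
  have hlt0 : 0 ≤ (1 - w) * b.val.2 := mul_nonneg hl0 ht0
  -- the defining property of D1 in coordinates
  have hbtw : dist (mk b) (tip hk1 hLpos 1) =
      dist (mk b) (mk (pt k L 1 s hs)) + dist (mk (pt k L 1 s hs)) (tip hk1 hLpos 1) := by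
    have hbtw0 : dist y.val.2 (tip hk1 hLpos 1) =
        dist y.val.2 y.val.1 + dist y.val.1 (tip hk1 hLpos 1) := hy
    rw [hx1, ← hb] at hbtw0
    exact hbtw0
  have e3 : dist (mk (pt k L 1 s hs)) (tip hk1 hLpos 1) = L 1 - s := by
    rw [dist_pt_tip hk1 hLpos le_rfl hk1, if_pos rfl]
  have e4 : dist (mk b) (mk (pt k L 1 s hs)) =
      if b.val.1 = 1 then |b.val.2 - s| else b.val.2 + s := dist_mk_mk _ _
  have e5 : dist (mk b) (tip hk1 hLpos 1) =
      if b.val.1 = 1 then L 1 - b.val.2 else b.val.2 + L 1 :=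
    dist_tip hk1 hLpos le_rfl hk1 _
  have hcfg : r ≤ dist (mk (pt k L 1 s hs)) (mk b) := by
    rw [← hx1, hb]; exact y.prop
  have e6 : dist (mk (pt k L 1 s hs)) (mk b) =
      if 1 = b.val.1 then |s - b.val.2| else s + b.val.2 := dist_mk_mk _ _
  -- the new distance
  have e7 : dist (d1Map hk1 hLpos u y).1 (d1Map hk1 hLpos u y).2 =
      if 1 = b.val.1 then |A - (1 - w) * b.val.2| else A + (1 - w) * b.val.2 := by
    rw [n1, n2]
    rw [dist_mk_mk]
    simp only [pt_fst, pt_snd, hsf1, hsf2]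
  have e8 : dist (mk (scaleFun (1 - w) b)) (mk (pt k L 1 A ⟨le_rfl, hk1, hA0, hA2⟩)) =
      if b.val.1 = 1 then |(1 - w) * b.val.2 - A| else (1 - w) * b.val.2 + A := by
    rw [dist_mk_mk]
    simp only [pt_fst, pt_snd, hsf1, hsf2]
  have e9 : dist (mk (scaleFun (1 - w) b)) (tip hk1 hLpos 1) =
      if b.val.1 = 1 then L 1 - (1 - w) * b.val.2 else (1 - w) * b.val.2 + L 1 := by
    rw [dist_tip hk1 hLpos le_rfl hk1]
    simp only [hsf1, hsf2]
  have e10 : dist (mk (pt k L 1 A ⟨le_rfl, hk1, hA0, hA2⟩)) (tip hk1 hLpos 1) = L 1 - A := by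
    rw [dist_pt_tip hk1 hLpos le_rfl hk1, if_pos rfl]
  by_cases hb1 : b.val.1 = 1
  · -- the second point is below the first on edge 1
    rw [if_pos hb1] at e4 e5
    rw [if_pos hb1.symm] at e6
    rw [e4, e5, e3] at hbtw
    rw [e6] at hcfg
    have hts : |b.val.2 - s| = s - b.val.2 := by linarith
    have hst : r ≤ s - b.val.2 := by
      rw [abs_sub_comm] at hts
      rw [hts] at hcfg
      exact hcfg
    have key : r ≤ A - (1 - w) * b.val.2 := by linarith
    constructor
    · rw [e7, if_pos hb1.symm, abs_of_nonneg (by linarith)]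
      exact key
    · intro h
      show dist (d1Map hk1 hLpos u y).2 (tip hk1 hLpos 1) =
        dist (d1Map hk1 hLpos u y).2 (d1Map hk1 hLpos u y).1 +
        dist (d1Map hk1 hLpos u y).1 (tip hk1 hLpos 1)
      rw [n1, n2, e8, e9, e10, if_pos hb1, if_pos hb1,
        abs_of_nonpos (by linarith : (1 - w) * b.val.2 - A ≤ 0)]
      ring
  · -- the second point is elsewhere
    rw [if_neg (fun hh : (1:ℕ) = b.val.1 => hb1 hh.symm)] at e6
    rw [e6] at hcfg
    constructor
    · rw [e7, if_neg (fun hh : (1:ℕ) = b.val.1 => hb1 hh.symm)]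
      rcases le_or_gt (2 * u) 1 with hcase | hcase
      · have hwz : w = 0 := max_eq_right (by linarith)
        rw [hwz]
        have h' : (1 - (0:ℝ)) * b.val.2 = b.val.2 := by ring
        rw [h']
        linarith
      · have hmo : m = 1 := min_eq_right (by linarith)
        have hAL : A = L 1 := by rw [hAdef, hmo]; ring
        rw [hAL]
        linarith
    · intro h
      show dist (d1Map hk1 hLpos u y).2 (tip hk1 hLpos 1) =
        dist (d1Map hk1 hLpos u y).2 (d1Map hk1 hLpos u y).1 +
        dist (d1Map hk1 hLpos u y).1 (tip hk1 hLpos 1)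
      rw [n1, n2, e8, e9, e10, if_neg hb1, if_neg hb1]
      ring

theorem d1Map_zero (hr : 0 < r) (hrL : ∀ i, 2 ≤ i → i ≤ k → L i < r)
    {y : ConfigSpace k L r} (hy : y ∈ D1 r hk1 hLpos) :
    d1Map hk1 hLpos 0 y = y.val := by
  obtain ⟨s, hs, hspos, hx1⟩ := d1_struct hk1 hLpos hr hrL hy
  have e1 : dist y.val.1 (ctr hk1 hLpos) = s := by rw [hx1]; exact dist_ctr hk1 hLpos _
  unfold d1Map
  apply Prod.ext
  · show node hk1 hLpos 1 _ = y.val.1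
    rw [e1]
    have harg : s + min (2 * (0:ℝ)) 1 * (L 1 - s) = s := by norm_num
    rw [harg, hx1]
    exact node_eq hk1 hLpos le_rfl hk1 hs.2.2.1 hs.2.2.2 _
  · show scale (1 - max (2 * (0:ℝ) - 1) 0) y.val.2 = y.val.2
    have : (1:ℝ) - max (2 * (0:ℝ) - 1) 0 = 1 := by norm_num
    rw [this]
    exact scale_one _

theorem d1Map_one (y : ConfigSpace k L r) :
    d1Map hk1 hLpos 1 y = (tip hk1 hLpos 1, ctr hk1 hLpos) := by
  unfold d1Map
  apply Prod.ext
  · show node hk1 hLpos 1 _ = tip hk1 hLpos 1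
    have : dist y.val.1 (ctr hk1 hLpos) + min (2 * (1:ℝ)) 1 *
        (L 1 - dist y.val.1 (ctr hk1 hLpos)) = L 1 := by
      have : min (2 * (1:ℝ)) 1 = 1 := by norm_num
      rw [this]; ring
    rw [this]
    rfl
  · show scale (1 - max (2 * (1:ℝ) - 1) 0) y.val.2 = ctr hk1 hLpos
    have : (1:ℝ) - max (2 * (1:ℝ) - 1) 0 = 0 := by norm_num
    rw [this]
    exact scale_zero hk1 hLpos _

theorem d1_contractible (hr : 0 < r) (hrL : ∀ i, 2 ≤ i → i ≤ k → L i < r) (hge : r ≤ L 1) :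
    ContractibleSpace (D1 r hk1 hLpos) := by
  have hL1 := hLpos 1 le_rfl hk1
  have hd : r ≤ dist (tip hk1 hLpos 1) (ctr hk1 hLpos) := by
    rw [tip_eq hk1 hLpos le_rfl hk1 ⟨le_rfl, hk1, hL1.le, le_rfl⟩,
      ctr_eq hk1 hLpos ⟨le_rfl, hk1, le_rfl, hL1.le⟩, dist_pt_pt, if_pos rfl, sub_zero,
      abs_of_nonneg hL1.le]
    exact hge
  have hmem : (⟨(tip hk1 hLpos 1, ctr hk1 hLpos), hd⟩ : ConfigSpace k L r) ∈
      D1 r hk1 hLpos := by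
    show dist (ctr hk1 hLpos) (tip hk1 hLpos 1) =
      dist (ctr hk1 hLpos) (tip hk1 hLpos 1) + dist (tip hk1 hLpos 1) (tip hk1 hLpos 1)
    rw [dist_self]
    ring
  rw [contractible_iff_id_nullhomotopic]
  refine ⟨⟨⟨(tip hk1 hLpos 1, ctr hk1 hLpos), hd⟩, hmem⟩, ⟨⟨⟨fun z =>
    ⟨⟨d1Map hk1 hLpos (z.1 : ℝ) z.2.val,
      (d1Map_spec hk1 hLpos hr hrL hge z.1.prop.1 z.1.prop.2 z.2.prop).1⟩,
      (d1Map_spec hk1 hLpos hr hrL hge z.1.prop.1 z.1.prop.2 z.2.prop).2 _⟩, ?_⟩, ?_, ?_⟩⟩⟩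
  · -- continuity
    apply Continuous.subtype_mk
    apply Continuous.subtype_mk
    have cu : Continuous fun z : I × (D1 r hk1 hLpos) => (z.1 : ℝ) :=
      continuous_subtype_val.comp continuous_fst
    have cy : Continuous fun z : I × (D1 r hk1 hLpos) =>
        (z.2 : ConfigSpace k L r).val :=
      continuous_subtype_val.comp (continuous_subtype_val.comp continuous_snd)
    have c1 : Continuous fun z : I × (D1 r hk1 hLpos) =>
        dist (z.2 : ConfigSpace k L r).val.1 (ctr hk1 hLpos) :=
      (Continuous.fst cy).dist continuous_const
    apply Continuous.prodMk
    · exact (node_continuous hk1 hLpos 1).comp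
        (c1.add ((((continuous_const.mul cu).min continuous_const)).mul
          (continuous_const.sub c1)))
    · exact (scale_continuous hk1 hLpos).comp
        ((continuous_const.sub (((continuous_const.mul cu).sub continuous_const).max
          continuous_const)).prodMk (Continuous.snd cy))
  · -- map_zero_left
    intro y
    apply Subtype.ext
    apply Subtype.ext
    show d1Map hk1 hLpos ((0 : I) : ℝ) y.val = (ContinuousMap.id _ y).val.val
    rw [Set.Icc.coe_zero]
    exact d1Map_zero hk1 hLpos hr hrL y.prop
  · -- map_one_left
    intro y
    apply Subtype.ext
    apply Subtype.ext
    show d1Map hk1 hLpos ((1 : I) : ℝ) y.val = _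
    rw [Set.Icc.coe_one]
    exact d1Map_one hk1 hLpos y.val

theorem continuous_swapCfg : Continuous (swapCfg : ConfigSpace k L r → ConfigSpace k L r) :=
  Continuous.subtype_mk ((continuous_val2 r).prodMk (continuous_val1 r)) _

/-- the swap homeomorphism between `D2` and `D1` -/
noncomputable def d2d1Homeo : (D2 r hk1 hLpos) ≃ₜ (D1 r hk1 hLpos) where
  toFun y := ⟨swapCfg y.val, y.prop⟩
  invFun x := ⟨swapCfg x.val, x.prop⟩
  left_inv y := by apply Subtype.ext; apply Subtype.ext; rfl
  right_inv x := by apply Subtype.ext; apply Subtype.ext; rfl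
  continuous_toFun :=
    Continuous.subtype_mk (continuous_swapCfg.comp continuous_subtype_val) _
  continuous_invFun :=
    Continuous.subtype_mk (continuous_swapCfg.comp continuous_subtype_val) _

theorem d2_contractible (hr : 0 < r) (hrL : ∀ i, 2 ≤ i → i ≤ k → L i < r) (hge : r ≤ L 1) :
    ContractibleSpace (D2 r hk1 hLpos) := by
  haveI := d1_contractible hk1 hLpos hr hrL hge
  exact (d2d1Homeo hk1 hLpos).contractibleSpace

end D1Con
end StarProof
namespace StarProof
open SeparationQuotient

variable {k : ℕ} {L : ℕ → ℝ} {r : ℝ}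

theorem mk_pt_edge_eq {i i' : ℕ} {s s' : ℝ} {hs hs'}
    (h : (mk (pt k L i s hs) : StarGraph k L) = mk (pt k L i' s' hs'))
    (h0 : 0 < s) (h0' : 0 < s') : i = i' := by
  rw [mk_eq_iff] at h
  split_ifs at h with hif
  · exact hif
  · exfalso
    have h' : s + s' = 0 := h
    linarith

theorem d1_d2_disjoint (hk1 : 1 ≤ k) (hLpos : ∀ i, 1 ≤ i → i ≤ k → 0 < L i) (hr : 0 < r)
    {x : ConfigSpace k L r} (h1 : x ∈ D1 r hk1 hLpos) (h2 : x ∈ D2 r hk1 hLpos) : False := by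
  have e1 : dist x.val.2 (tip hk1 hLpos 1) =
      dist x.val.2 x.val.1 + dist x.val.1 (tip hk1 hLpos 1) := h1
  have e2 : dist x.val.1 (tip hk1 hLpos 1) =
      dist x.val.1 x.val.2 + dist x.val.2 (tip hk1 hLpos 1) := h2
  have e3 : dist x.val.2 x.val.1 = dist x.val.1 x.val.2 := dist_comm _ _
  have := x.prop
  linarith

theorem d1_flap_disjoint (hk1 : 1 ≤ k) (hLpos : ∀ i, 1 ≤ i → i ≤ k → 0 < L i) (hr : 0 < r)
    (hrL : ∀ i, 2 ≤ i → i ≤ k → L i < r)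
    {i j : ℕ} (h2i : 2 ≤ i) (hik : i ≤ k) (h1j : 1 ≤ j) (hjk : j ≤ k) (hij : i ≠ j)
    (hLi : L i < r) (hLj : L j < r) {x : ConfigSpace k L r}
    (h1 : x ∈ D1 r hk1 hLpos) (h2 : x ∈ FlapSet r hk1 hLpos i j) : False := by
  obtain ⟨s, hs, hspos, hx1⟩ := d1_struct hk1 hLpos hr hrL h1
  obtain ⟨s', t', hs', ht', hspos', htpos', _, hx1', _⟩ :=
    flap_struct hk1 hLpos hr (by omega) hik h1j hjk hij hLi hLj h2
  have : (1:ℕ) = i := mk_pt_edge_eq (hx1.symm.trans hx1') hspos hspos'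
  omega

theorem d2_flap_disjoint (hk1 : 1 ≤ k) (hLpos : ∀ i, 1 ≤ i → i ≤ k → 0 < L i) (hr : 0 < r)
    (hrL : ∀ i, 2 ≤ i → i ≤ k → L i < r)
    {i j : ℕ} (h1i : 1 ≤ i) (hik : i ≤ k) (h2j : 2 ≤ j) (hjk : j ≤ k) (hij : i ≠ j)
    (hLi : L i < r) (hLj : L j < r) {x : ConfigSpace k L r}
    (h1 : x ∈ D2 r hk1 hLpos) (h2 : x ∈ FlapSet r hk1 hLpos i j) : False := by
  obtain ⟨s, hs, hspos, hx1⟩ := d1_struct hk1 hLpos hr hrL ((mem_D2_iff hk1 hLpos x).1 h1)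
  obtain ⟨s', t', hs', ht', hspos', htpos', _, _, hx2'⟩ :=
    flap_struct hk1 hLpos hr h1i hik (by omega) hjk hij hLi hLj h2
  have hsw : (swapCfg x).val.1 = x.val.2 := rfl
  rw [hsw] at hx1
  have : (1:ℕ) = j := mk_pt_edge_eq (hx1.symm.trans hx2') hspos htpos'
  omega

theorem flap_flap_disjoint (hk1 : 1 ≤ k) (hLpos : ∀ i, 1 ≤ i → i ≤ k → 0 < L i) (hr : 0 < r)
    {i j i' j' : ℕ} (h1i : 1 ≤ i) (hik : i ≤ k) (h1j : 1 ≤ j) (hjk : j ≤ k) (hij : i ≠ j)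
    (hLi : L i < r) (hLj : L j < r)
    (h1i' : 1 ≤ i') (hik' : i' ≤ k) (h1j' : 1 ≤ j') (hjk' : j' ≤ k) (hij' : i' ≠ j')
    (hLi' : L i' < r) (hLj' : L j' < r) (hne : (i, j) ≠ (i', j')) {x : ConfigSpace k L r}
    (h1 : x ∈ FlapSet r hk1 hLpos i j) (h2 : x ∈ FlapSet r hk1 hLpos i' j') : False := by
  obtain ⟨s, t, hs, ht, hspos, htpos, _, hx1, hx2⟩ :=
    flap_struct hk1 hLpos hr h1i hik h1j hjk hij hLi hLj h1
  obtain ⟨s', t', hs', ht', hspos', htpos', _, hx1', hx2'⟩ :=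
    flap_struct hk1 hLpos hr h1i' hik' h1j' hjk' hij' hLi' hLj' h2
  have e1 : i = i' := mk_pt_edge_eq (hx1.symm.trans hx1') hspos hspos'
  have e2 : j = j' := mk_pt_edge_eq (hx2.symm.trans hx2') htpos htpos'
  exact hne (by rw [e1, e2])

theorem cover_lt (hk1 : 1 ≤ k) (hLpos : ∀ i, 1 ≤ i → i ≤ k → 0 < L i) (hr : 0 < r)
    (hrL : ∀ i, 2 ≤ i → i ≤ k → L i < r) (hlt : L 1 < r) (x : ConfigSpace k L r) :
    ∃ i j, 1 ≤ i ∧ i ≤ k ∧ 1 ≤ j ∧ j ≤ k ∧ i ≠ j ∧ x ∈ FlapSet r hk1 hLpos i j := by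
  have hall : ∀ m, 1 ≤ m → m ≤ k → L m < r := by
    intro m h1 h2
    rcases Nat.lt_or_ge m 2 with h | h
    · have : m = 1 := by omega
      rw [this]; exact hlt
    · exact hrL m h h2
  -- first a helper: a configuration in D1 is in a flap with first edge 1
  have hD1flap : ∀ y : ConfigSpace k L r, y ∈ D1 r hk1 hLpos →
      ∃ j, 2 ≤ j ∧ j ≤ k ∧ y ∈ FlapSet r hk1 hLpos 1 j := by
    intro y hy
    obtain ⟨s, hs, hspos, hy1⟩ := d1_struct hk1 hLpos hr hrL hy
    obtain ⟨b, hb⟩ := surjective_mk y.val.2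
    obtain ⟨hb1, hbk, ht0, htL⟩ := b.prop
    have hcfg : r ≤ dist (mk (pt k L 1 s hs)) (mk b) := by
      rw [← hy1, hb]; exact y.prop
    rw [dist_mk_mk] at hcfg
    simp only [pt_fst, pt_snd] at hcfg
    have hbn1 : ¬ (1:ℕ) = b.val.1 := by
      intro h
      erw [if_pos h] at hcfg
      have h1 : |s - b.val.2| ≤ L 1 := by
        rw [abs_le]
        have : b.val.2 ≤ L 1 := htL.trans (le_of_eq (congrArg L h.symm))
        have hsl : s ≤ L 1 := hs.2.2.2
        constructor <;> linarith
      linarith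
    erw [if_neg hbn1] at hcfg
    have hbpos : 0 < b.val.2 := by
      rcases lt_or_ge 0 b.val.2 with h | h
      · exact h
      · exfalso
        have : b.val.2 = 0 := le_antisymm h ht0
        rw [this] at hcfg
        have : s ≤ L 1 := hs.2.2.2
        linarith
    refine ⟨b.val.1, by omega, hbk, ?_⟩
    apply mem_flap_of hk1 hLpos le_rfl hk1 hb1 hbk (fun h => hbn1 h)
      (s := s) (hs := hs) (t := b.val.2) (ht := ⟨hb1, hbk, ht0, htL⟩) hy1
    rw [← hb]
    rfl
  rcases classify hk1 hLpos hr hrL x with hx | hx | ⟨i, j, h2i, hik, h2j, hjk, hij, hx⟩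
  · obtain ⟨j, h2j, hjk, hx'⟩ := hD1flap x hx
    exact ⟨1, j, le_rfl, hk1, by omega, hjk, by omega, hx'⟩
  · obtain ⟨j, h2j, hjk, hx'⟩ := hD1flap (swapCfg x) ((mem_D2_iff hk1 hLpos x).1 hx)
    refine ⟨j, 1, by omega, hjk, le_rfl, hk1, by omega, ?_⟩
    obtain ⟨hb1, hb2⟩ := hx'
    exact ⟨hb2, hb1⟩
  · exact ⟨i, j, by omega, hik, by omega, hjk, hij, hx⟩

theorem comp_simply {X : Type*} [TopologicalSpace X] {C : Set X} (hC : IsClopen C) {x : X}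
    (hx : x ∈ C) (hcon : ContractibleSpace C) : SimplyConnectedSpace (pathComponent x) := by
  have hpc : IsPathConnected C := by
    rw [isPathConnected_iff_pathConnectedSpace]
    infer_instance
  have heq : pathComponent x = C := by
    apply Set.Subset.antisymm
    · exact (pathComponent_subset_component x).trans (hC.connectedComponent_subset hx)
    · intro y hy
      exact (hpc.joinedIn x hx y hy).joined
  rw [heq]
  infer_instance

end StarProof
namespace StarProof
open SeparationQuotient

variable {k : ℕ} {L : ℕ → ℝ} {r : ℝ}

/-- pairs of distinct short edges -/
def shortPairs (k : ℕ) : Finset (ℕ × ℕ) :=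
  (Finset.range (k+1) ×ˢ Finset.range (k+1)).filter (fun p => 2 ≤ p.1 ∧ 2 ≤ p.2 ∧ p.1 ≠ p.2)

theorem mem_shortPairs {k : ℕ} {p : ℕ × ℕ} :
    p ∈ shortPairs k ↔ 2 ≤ p.1 ∧ p.1 ≤ k ∧ 2 ≤ p.2 ∧ p.2 ≤ k ∧ p.1 ≠ p.2 := by
  unfold shortPairs
  simp only [Finset.mem_filter, Finset.mem_product, Finset.mem_range]
  omega

/-- pairs of distinct edges -/
def allPairs (k : ℕ) : Finset (ℕ × ℕ) :=
  (Finset.range (k+1) ×ˢ Finset.range (k+1)).filter (fun p => 1 ≤ p.1 ∧ 1 ≤ p.2 ∧ p.1 ≠ p.2)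

theorem mem_allPairs {k : ℕ} {p : ℕ × ℕ} :
    p ∈ allPairs k ↔ 1 ≤ p.1 ∧ p.1 ≤ k ∧ 1 ≤ p.2 ∧ p.2 ≤ k ∧ p.1 ≠ p.2 := by
  unfold allPairs
  simp only [Finset.mem_filter, Finset.mem_product, Finset.mem_range]
  omega

section Clopen
variable (hk1 : 1 ≤ k) (hLpos : ∀ i, 1 ≤ i → i ≤ k → 0 < L i)

theorem clopen_D1 (hr : 0 < r) (hrL : ∀ i, 2 ≤ i → i ≤ k → L i < r) :
    IsClopen (D1 r hk1 hLpos) := by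
  refine ⟨isClosed_D1 r hk1 hLpos, ?_⟩
  rw [← isClosed_compl_iff]
  have hcompl : (D1 r hk1 hLpos)ᶜ =
      D2 r hk1 hLpos ∪ ⋃ p ∈ shortPairs k, FlapSet r hk1 hLpos p.1 p.2 := by
    ext y
    simp only [Set.mem_compl_iff, Set.mem_union, Set.mem_iUnion, exists_prop]
    constructor
    · intro hy
      rcases classify hk1 hLpos hr hrL y with h | h | ⟨i, j, h2i, hik, h2j, hjk, hij, h⟩
      · exact absurd h hy
      · left; exact h
      · right
        exact ⟨(i, j), mem_shortPairs.2 ⟨h2i, hik, h2j, hjk, hij⟩, h⟩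
    · rintro (h | ⟨p, hp, h⟩) hy
      · exact d1_d2_disjoint hk1 hLpos hr hy h
      · obtain ⟨h2i, hik, h2j, hjk, hij⟩ := mem_shortPairs.1 hp
        exact d1_flap_disjoint hk1 hLpos hr hrL h2i hik (by omega) hjk hij
          (hrL _ h2i hik) (hrL _ h2j hjk) hy h
  rw [hcompl]
  exact (isClosed_D2 r hk1 hLpos).union
    (Set.Finite.isClosed_biUnion (Finset.finite_toSet _)
      (fun p _ => isClosed_FlapSet r hk1 hLpos p.1 p.2))

theorem clopen_D2 (hr : 0 < r) (hrL : ∀ i, 2 ≤ i → i ≤ k → L i < r) :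
    IsClopen (D2 r hk1 hLpos) := by
  refine ⟨isClosed_D2 r hk1 hLpos, ?_⟩
  rw [← isClosed_compl_iff]
  have hcompl : (D2 r hk1 hLpos)ᶜ =
      D1 r hk1 hLpos ∪ ⋃ p ∈ shortPairs k, FlapSet r hk1 hLpos p.1 p.2 := by
    ext y
    simp only [Set.mem_compl_iff, Set.mem_union, Set.mem_iUnion, exists_prop]
    constructor
    · intro hy
      rcases classify hk1 hLpos hr hrL y with h | h | ⟨i, j, h2i, hik, h2j, hjk, hij, h⟩
      · left; exact h
      · exact absurd h hy
      · right
        exact ⟨(i, j), mem_shortPairs.2 ⟨h2i, hik, h2j, hjk, hij⟩, h⟩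
    · rintro (h | ⟨p, hp, h⟩) hy
      · exact d1_d2_disjoint hk1 hLpos hr h hy
      · obtain ⟨h2i, hik, h2j, hjk, hij⟩ := mem_shortPairs.1 hp
        exact d2_flap_disjoint hk1 hLpos hr hrL (by omega) hik h2j hjk hij
          (hrL _ h2i hik) (hrL _ h2j hjk) hy h
  rw [hcompl]
  exact (isClosed_D1 r hk1 hLpos).union
    (Set.Finite.isClosed_biUnion (Finset.finite_toSet _)
      (fun p _ => isClosed_FlapSet r hk1 hLpos p.1 p.2))

theorem clopen_flap_ge (hr : 0 < r) (hrL : ∀ i, 2 ≤ i → i ≤ k → L i < r)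
    {i j : ℕ} (h2i : 2 ≤ i) (hik : i ≤ k) (h2j : 2 ≤ j) (hjk : j ≤ k) (hij : i ≠ j) :
    IsClopen (FlapSet r hk1 hLpos i j) := by
  refine ⟨isClosed_FlapSet r hk1 hLpos i j, ?_⟩
  rw [← isClosed_compl_iff]
  have hcompl : (FlapSet r hk1 hLpos i j)ᶜ =
      D1 r hk1 hLpos ∪ D2 r hk1 hLpos ∪
        ⋃ p ∈ (shortPairs k).erase (i, j), FlapSet r hk1 hLpos p.1 p.2 := by
    ext y
    simp only [Set.mem_compl_iff, Set.mem_union, Set.mem_iUnion, exists_prop]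
    constructor
    · intro hy
      rcases classify hk1 hLpos hr hrL y with h | h | ⟨i', j', h2i', hik', h2j', hjk', hij', h⟩
      · left; left; exact h
      · left; right; exact h
      · right
        refine ⟨(i', j'), Finset.mem_erase.2 ⟨?_, mem_shortPairs.2 ⟨h2i', hik', h2j', hjk', hij'⟩⟩, h⟩
        intro hne
        apply hy
        rw [Prod.mk.injEq] at hne
        rw [hne.1, hne.2] at h
        exact h
    · rintro ((h | h) | ⟨p, hp, h⟩) hy
      · exact d1_flap_disjoint hk1 hLpos hr hrL h2i hik (by omega) hjk hij
          (hrL _ h2i hik) (hrL _ h2j hjk) h hy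
      · exact d2_flap_disjoint hk1 hLpos hr hrL (by omega) hik h2j hjk hij
          (hrL _ h2i hik) (hrL _ h2j hjk) h hy
      · obtain ⟨hne, hp'⟩ := Finset.mem_erase.1 hp
        obtain ⟨h2i', hik', h2j', hjk', hij'⟩ := mem_shortPairs.1 hp'
        exact flap_flap_disjoint hk1 hLpos hr (by omega) hik' (by omega) hjk' hij'
          (hrL _ h2i' hik') (hrL _ h2j' hjk')
          (by omega) hik (by omega) hjk hij (hrL _ h2i hik) (hrL _ h2j hjk)
          (by simpa using hne) h hy
  rw [hcompl]
  exact ((isClosed_D1 r hk1 hLpos).union (isClosed_D2 r hk1 hLpos)).union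
    (Set.Finite.isClosed_biUnion (Finset.finite_toSet _)
      (fun p _ => isClosed_FlapSet r hk1 hLpos p.1 p.2))

theorem clopen_flap_lt (hr : 0 < r) (hrL : ∀ i, 2 ≤ i → i ≤ k → L i < r) (hlt : L 1 < r)
    {i j : ℕ} (h1i : 1 ≤ i) (hik : i ≤ k) (h1j : 1 ≤ j) (hjk : j ≤ k) (hij : i ≠ j) :
    IsClopen (FlapSet r hk1 hLpos i j) := by
  have hall : ∀ m, 1 ≤ m → m ≤ k → L m < r := by
    intro m h1 h2
    rcases Nat.lt_or_ge m 2 with h | h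
    · have : m = 1 := by omega
      rw [this]; exact hlt
    · exact hrL m h h2
  refine ⟨isClosed_FlapSet r hk1 hLpos i j, ?_⟩
  rw [← isClosed_compl_iff]
  have hcompl : (FlapSet r hk1 hLpos i j)ᶜ =
      ⋃ p ∈ (allPairs k).erase (i, j), FlapSet r hk1 hLpos p.1 p.2 := by
    ext y
    simp only [Set.mem_compl_iff, Set.mem_iUnion, exists_prop]
    constructor
    · intro hy
      obtain ⟨i', j', h1i', hik', h1j', hjk', hij', h⟩ := cover_lt hk1 hLpos hr hrL hlt y
      refine ⟨(i', j'), Finset.mem_erase.2 ⟨?_, mem_allPairs.2 ⟨h1i', hik', h1j', hjk', hij'⟩⟩, h⟩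
      intro hne
      apply hy
      rw [Prod.mk.injEq] at hne
      rw [hne.1, hne.2] at h
      exact h
    · rintro ⟨p, hp, h⟩ hy
      obtain ⟨hne, hp'⟩ := Finset.mem_erase.1 hp
      obtain ⟨h1i', hik', h1j', hjk', hij'⟩ := mem_allPairs.1 hp'
      exact flap_flap_disjoint hk1 hLpos hr h1i' hik' h1j' hjk' hij'
        (hall _ h1i' hik') (hall _ h1j' hjk')
        h1i hik h1j hjk hij (hall _ h1i hik) (hall _ h1j hjk)
        (by simpa using hne) h hy
  rw [hcompl]
  exact Set.Finite.isClosed_biUnion (Finset.finite_toSet _)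
    (fun p _ => isClosed_FlapSet r hk1 hLpos p.1 p.2)

end Clopen
end StarProof
/-- if `4 ≤ k` and `L i < r` for every `i ∈ {2,…,k}` (no condition on
`L 1`), then every nonempty path component of `(Star_k)²_{r,L}` is simply connected. -/
theorem configSpace_components_simplyConnected (k : ℕ) (hk : 4 ≤ k) (r : ℝ) (hr : 0 < r)
    (L : ℕ → ℝ) (hLpos : ∀ i, 1 ≤ i → i ≤ k → 0 < L i)
    (hrL : ∀ i, 2 ≤ i → i ≤ k → L i < r) :
    ∀ x : ConfigSpace k L r, SimplyConnectedSpace (pathComponent x) := by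
  intro x
  have hk1 : 1 ≤ k := by omega
  rcases le_or_gt r (L 1) with hge | hlt
  · rcases StarProof.classify hk1 hLpos hr hrL x with hx | hx |
      ⟨i, j, h2i, hik, h2j, hjk, hij, hx⟩
    · exact StarProof.comp_simply (StarProof.clopen_D1 hk1 hLpos hr hrL) hx
        (StarProof.d1_contractible hk1 hLpos hr hrL hge)
    · exact StarProof.comp_simply (StarProof.clopen_D2 hk1 hLpos hr hrL) hx
        (StarProof.d2_contractible hk1 hLpos hr hrL hge)
    · exact StarProof.comp_simply
        (StarProof.clopen_flap_ge hk1 hLpos hr hrL h2i hik h2j hjk hij) hx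
        (StarProof.flap_contractible hk1 hLpos hr (by omega) hik (by omega) hjk hij
          (hrL i h2i hik) (hrL j h2j hjk) x hx)
  · obtain ⟨i, j, h1i, hik, h1j, hjk, hij, hx⟩ :=
      StarProof.cover_lt hk1 hLpos hr hrL hlt x
    have hall : ∀ m, 1 ≤ m → m ≤ k → L m < r := by
      intro m h1 h2
      rcases Nat.lt_or_ge m 2 with h | h
      · have : m = 1 := by omega
        rw [this]; exact hlt
      · exact hrL m h h2
    exact StarProof.comp_simply
      (StarProof.clopen_flap_lt hk1 hLpos hr hrL hlt h1i hik h1j hjk hij) hx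
      (StarProof.flap_contractible hk1 hLpos hr h1i hik h1j hjk hij
        (hall i h1i hik) (hall j h1j hjk) x hx)
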